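/- Let a, b ∈ ℝ with b ≠ 0, and let p : ℝ → ℝ be continuous on [0,1]. Suppose w : ℝ → ℝ is four times continuously differentiable on [0,1], with ∫₀¹ w(x)² dx > 0, satisfies the simply supported boundary conditions w(0) = w(1) = 0 and w''(0) = w''(1) = 0, and for all x ∈ [0,1] both a·w⁗(x) − b·(2·κ(w)·w''(x) − κ(w)²·w(x)) = p(x) and (a − b)·w⁗(x) = p(x) hold, where κ(w) = (∫₀¹ w·w'')/(∫₀¹ w²). Then there exist a positive integer n and a nonzero constant c such that w(x) = c·sin(n·π·x) for all x ∈ [0,1]. -/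

import Mathlib

open Real Set MeasureTheory intervalIntegral

/-- `D n w` is the `n`-th derivative of `w` on the interval `[0,1]`. -/
noncomputable def D (n : ℕ) (w : ℝ → ℝ) : ℝ → ℝ :=
  iteratedDerivWithin n w (Set.Icc (0 : ℝ) 1)

/-- The Rayleigh-type quotient `κ(w) = (∫₀¹ w w'') / (∫₀¹ w²)`. -/
noncomputable def kappa (w : ℝ → ℝ) : ℝ :=
  (∫ x in (0:ℝ)..1, w x * D 2 w x) / (∫ x in (0:ℝ)..1, (w x) ^ 2)

lemma uS : UniqueDiffOn ℝ (Set.Icc (0:ℝ) 1) := uniqueDiffOn_Icc zero_lt_one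

lemma D_zero (w : ℝ → ℝ) : D 0 w = w := by
  funext x; simp [D]

lemma hasDeriv_D {w : ℝ → ℝ} (hw : ContDiffOn ℝ 4 w (Set.Icc (0:ℝ) 1)) {n : ℕ} (hn : n < 4)
    {x : ℝ} (hx : x ∈ Set.Icc (0:ℝ) 1) :
    HasDerivWithinAt (D n w) (D (n+1) w x) (Set.Icc (0:ℝ) 1) x := by
  have hd : DifferentiableWithinAt ℝ (D n w) (Set.Icc (0:ℝ) 1) x :=
    (hw.differentiableOn_iteratedDerivWithin (by exact_mod_cast hn) uS) x hx
  have h2 := hd.hasDerivWithinAt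
  have h3 : D (n+1) w x = derivWithin (D n w) (Set.Icc (0:ℝ) 1) x :=
    congrFun iteratedDerivWithin_succ x
  rw [h3]; exact h2

lemma cont_D {w : ℝ → ℝ} (hw : ContDiffOn ℝ 4 w (Set.Icc (0:ℝ) 1)) {n : ℕ} (hn : n ≤ 4) :
    ContinuousOn (D n w) (Set.Icc (0:ℝ) 1) :=
  hw.continuousOn_iteratedDerivWithin (by exact_mod_cast hn) uS

lemma zero_of_ode {μ : ℝ} (hμ : 0 ≤ μ) {z z' : ℝ → ℝ}
    (hz : ∀ x ∈ Set.Icc (0:ℝ) 1, HasDerivWithinAt z (z' x) (Set.Icc (0:ℝ) 1) x)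
    (hz' : ∀ x ∈ Set.Icc (0:ℝ) 1, HasDerivWithinAt z' (-μ * z x) (Set.Icc (0:ℝ) 1) x)
    (h0 : z 0 = 0) (h0' : z' 0 = 0) : ∀ x ∈ Set.Icc (0:ℝ) 1, z x = 0 := by
  have hmem0 : (0:ℝ) ∈ Set.Icc (0:ℝ) 1 := by constructor <;> norm_num
  set E : ℝ → ℝ := fun x => z' x ^ 2 + μ * z x ^ 2 with hE
  have hEderiv : ∀ x ∈ Set.Icc (0:ℝ) 1, HasDerivWithinAt E 0 (Set.Icc (0:ℝ) 1) x := by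
    intro x hx
    have h1 := ((hz' x hx).pow 2).add (((hz x hx).pow 2).const_mul μ)
    exact h1.congr_deriv (by ring)
  have hEconst : ∀ x ∈ Set.Icc (0:ℝ) 1, E x = E 0 := by
    apply constant_of_derivWithin_zero
    · exact fun x hx => (hEderiv x hx).differentiableWithinAt
    · intro x hx
      have hx' : x ∈ Set.Icc (0:ℝ) 1 := Set.Ico_subset_Icc_self hx
      exact (hEderiv x hx').derivWithin (uS x hx')
  have hE0 : E 0 = 0 := by simp [hE, h0, h0']
  have hz'0 : ∀ x ∈ Set.Icc (0:ℝ) 1, z' x = 0 := by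
    intro x hx
    have h := hEconst x hx
    rw [hE0] at h
    have h2 : z' x ^ 2 + μ * z x ^ 2 = 0 := h
    nlinarith [sq_nonneg (z' x), mul_nonneg hμ (sq_nonneg (z x))]
  have hzconst : ∀ x ∈ Set.Icc (0:ℝ) 1, z x = z 0 := by
    apply constant_of_derivWithin_zero
    · exact fun x hx => (hz x hx).differentiableWithinAt
    · intro x hx
      have hx' : x ∈ Set.Icc (0:ℝ) 1 := Set.Ico_subset_Icc_self hx
      have h := hz x hx'
      rw [hz'0 x hx'] at h
      exact h.derivWithin (uS x hx')
  intro x hx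
  rw [hzconst x hx, h0]

lemma ode_unique {μ : ℝ} (hμ : 0 ≤ μ) {f z z' g g' : ℝ → ℝ}
    (hz : ∀ x ∈ Set.Icc (0:ℝ) 1, HasDerivWithinAt z (z' x) (Set.Icc (0:ℝ) 1) x)
    (hz' : ∀ x ∈ Set.Icc (0:ℝ) 1, HasDerivWithinAt z' (-μ * z x + f x) (Set.Icc (0:ℝ) 1) x)
    (hg : ∀ x ∈ Set.Icc (0:ℝ) 1, HasDerivWithinAt g (g' x) (Set.Icc (0:ℝ) 1) x)
    (hg' : ∀ x ∈ Set.Icc (0:ℝ) 1, HasDerivWithinAt g' (-μ * g x + f x) (Set.Icc (0:ℝ) 1) x)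
    (e0 : z 0 = g 0) (e0' : z' 0 = g' 0) : ∀ x ∈ Set.Icc (0:ℝ) 1, z x = g x := by
  have key := zero_of_ode hμ (z := fun x => z x - g x) (z' := fun x => z' x - g' x)
    (fun x hx => (hz x hx).sub (hg x hx))
    (fun x hx => by
      have h := (hz' x hx).sub (hg' x hx)
      exact h.congr_deriv (by ring))
    (by simp [e0]) (by simp [e0'])
  intro x hx
  have := key x hx
  linarith

lemma eq_zero_of_integral_sq {f : ℝ → ℝ} (hf : ContinuousOn f (Set.Icc (0:ℝ) 1))
    (h : ∫ x in (0:ℝ)..1, f x ^ 2 = 0) : ∀ x ∈ Set.Icc (0:ℝ) 1, f x = 0 := by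
  have hc2 : ContinuousOn (fun x => f x ^ 2) (Set.Icc (0:ℝ) 1) := hf.pow 2
  have hint : IntervalIntegrable (fun x => f x ^ 2) volume 0 1 := by
    apply ContinuousOn.intervalIntegrable
    rwa [Set.uIcc_of_le (zero_le_one)]
  have hae := (intervalIntegral.integral_eq_zero_iff_of_le_of_nonneg_ae zero_le_one
    (Filter.Eventually.of_forall fun x => sq_nonneg (f x)) hint).mp h
  rw [Measure.restrict_congr_set Ioc_ae_eq_Icc] at hae
  have heq := Measure.eqOn_Icc_of_ae_eq volume (zero_ne_one) hae hc2 continuousOn_const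
  intro x hx
  have := heq hx
  simp only [Pi.zero_apply] at this
  exact pow_eq_zero_iff (two_ne_zero) |>.mp this


lemma hasDerivAt_sin_mul (ω x : ℝ) :
    HasDerivAt (fun y => Real.sin (ω * y)) (ω * Real.cos (ω * x)) x := by
  have h2 : HasDerivAt (fun y : ℝ => ω * y) ω x := by simpa using (hasDerivAt_id x).const_mul ω
  have h := (Real.hasDerivAt_sin (ω * x)).comp x h2
  simpa [Function.comp_def, mul_comm] using h

lemma hasDerivAt_cos_mul (ω x : ℝ) :
    HasDerivAt (fun y => Real.cos (ω * y)) (-(ω * Real.sin (ω * x))) x := by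
  have h2 : HasDerivAt (fun y : ℝ => ω * y) ω x := by simpa using (hasDerivAt_id x).const_mul ω
  have h := (Real.hasDerivAt_cos (ω * x)).comp x h2
  have : -Real.sin (ω * x) * ω = -(ω * Real.sin (ω * x)) := by ring
  rw [this] at h
  simpa [Function.comp_def] using h

/-- Laminated-strip classification: for a Poisson-coupling coefficient `b ≠ 0`,
a simply supported strip deflection solving simultaneously the PGD limit strip
equation `a w⁗ − b (2κ(w) w'' − κ(w)² w) = p` and the Classical Laminated Plate Theory
strip equation `(a − b) w⁗ = p` must be a pure sinusoidal deflection `w(x) = c sin(nπx)`. -/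
theorem simply_supported_laminated_solution_is_sinusoidal
    (a b : ℝ) (hb : b ≠ 0)
    (p : ℝ → ℝ) (hp : ContinuousOn p (Set.Icc (0 : ℝ) 1))
    (w : ℝ → ℝ) (hw : ContDiffOn ℝ 4 w (Set.Icc (0 : ℝ) 1))
    (hpos : 0 < ∫ x in (0:ℝ)..1, (w x) ^ 2)
    (h0 : w 0 = 0) (h1 : w 1 = 0) (h0'' : D 2 w 0 = 0) (h1'' : D 2 w 1 = 0)
    (hPGD : ∀ x ∈ Set.Icc (0 : ℝ) 1,
      a * D 4 w x - b * (2 * kappa w * D 2 w x - (kappa w) ^ 2 * w x) = p x)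
    (hCLPT : ∀ x ∈ Set.Icc (0 : ℝ) 1, (a - b) * D 4 w x = p x) :
    ∃ n : ℕ, 0 < n ∧ ∃ c : ℝ, c ≠ 0 ∧
      ∀ x ∈ Set.Icc (0 : ℝ) 1, w x = c * Real.sin ((n : ℝ) * π * x) := by
  have h0S : (0:ℝ) ∈ Set.Icc (0:ℝ) 1 := by norm_num
  have h1S : (1:ℝ) ∈ Set.Icc (0:ℝ) 1 := by norm_num
  set k := kappa w with hk
  -- the ODE satisfied by w
  have hode : ∀ x ∈ Set.Icc (0:ℝ) 1, D 4 w x = 2*k*D 2 w x - k^2 * w x := by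
    intro x hx
    have h1' := hPGD x hx
    have h2' := hCLPT x hx
    have h3 : b * (D 4 w x - (2*k*D 2 w x - k^2 * w x)) = 0 := by linear_combination h1' - h2'
    rcases mul_eq_zero.mp h3 with h | h
    · exact absurd h hb
    · linarith
  -- continuity
  have hcw : ContinuousOn w (Set.Icc (0:ℝ) 1) := by
    have := cont_D hw (n := 0) (by norm_num); rwa [D_zero] at this
  have hc1 : ContinuousOn (D 1 w) (Set.Icc (0:ℝ) 1) := cont_D hw (by norm_num)
  have hc2 : ContinuousOn (D 2 w) (Set.Icc (0:ℝ) 1) := cont_D hw (by norm_num)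
  have hii : ∀ {f : ℝ → ℝ}, ContinuousOn f (Set.Icc (0:ℝ) 1) →
      IntervalIntegrable f MeasureTheory.volume 0 1 := by
    intro f hf
    apply ContinuousOn.intervalIntegrable
    rwa [Set.uIcc_of_le zero_le_one]
  have hderiv01 : ∀ x ∈ Set.Icc (0:ℝ) 1,
      HasDerivWithinAt w (D 1 w x) (Set.Icc (0:ℝ) 1) x := by
    intro x hx
    have := hasDeriv_D hw (n := 0) (by norm_num) hx
    rwa [D_zero] at this
  -- contradiction lemma for w ≡ 0
  have hwzero_contra : ¬ (∀ x ∈ Set.Icc (0:ℝ) 1, w x = 0) := by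
    intro hz
    have hz2 : ∫ x in (0:ℝ)..1, (w x)^2 = 0 := by
      rw [intervalIntegral.integral_congr (g := fun _ => (0:ℝ))]
      · simp
      · intro x hx
        rw [Set.uIcc_of_le zero_le_one] at hx
        simp [hz x hx]
    linarith
  -- integration by parts
  have hFTC : ∫ x in (0:ℝ)..1, ((D 1 w x)^2 + w x * D 2 w x)
      = w 1 * D 1 w 1 - w 0 * D 1 w 0 := by
    apply intervalIntegral.integral_eq_sub_of_hasDeriv_right_of_le zero_le_one (hcw.mul hc1)
    · intro x hx
      have hxS : x ∈ Set.Icc (0:ℝ) 1 := Set.Ioo_subset_Icc_self hx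
      have hmem : Set.Icc (0:ℝ) 1 ∈ nhds x := Icc_mem_nhds hx.1 hx.2
      have d0 : HasDerivAt w (D 1 w x) x := (hderiv01 x hxS).hasDerivAt hmem
      have d1 : HasDerivAt (D 1 w) (D 2 w x) x :=
        ((hasDeriv_D hw (n := 1) (by norm_num) hxS)).hasDerivAt hmem
      have := (d0.mul d1).hasDerivWithinAt (s := Set.Ioi x)
      convert this using 1
      ring
    · exact hii ((hc1.pow 2).add (hcw.mul hc2))
  have hadd := intervalIntegral.integral_add (f := fun x => D 1 w x ^ 2) (g := fun x => w x * D 2 w x) (hii (hc1.pow 2)) (hii (hcw.mul hc2))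
  rw [hadd] at hFTC
  rw [h0, h1] at hFTC
  have hIBP : ∫ x in (0:ℝ)..1, w x * D 2 w x = -∫ x in (0:ℝ)..1, (D 1 w x)^2 := by
    linarith
  -- positivity of ∫ (w')²
  have hI1nonneg : 0 ≤ ∫ x in (0:ℝ)..1, (D 1 w x)^2 :=
    intervalIntegral.integral_nonneg zero_le_one (fun u _ => sq_nonneg _)
  have hI1pos : 0 < ∫ x in (0:ℝ)..1, (D 1 w x)^2 := by
    rcases hI1nonneg.lt_or_eq with h | h
    · exact h
    · exfalso
      have hz1 := eq_zero_of_integral_sq hc1 h.symm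
      apply hwzero_contra
      have hconst : ∀ x ∈ Set.Icc (0:ℝ) 1, w x = w 0 := by
        apply constant_of_derivWithin_zero
        · exact fun x hx => (hderiv01 x hx).differentiableWithinAt
        · intro x hx
          have hx' : x ∈ Set.Icc (0:ℝ) 1 := Set.Ico_subset_Icc_self hx
          have hd := hderiv01 x hx'
          rw [hz1 x hx'] at hd
          exact hd.derivWithin (uS x hx')
      intro x hx
      rw [hconst x hx, h0]
  -- κ < 0
  have hkneg : k < 0 := by
    rw [hk]
    unfold kappa
    rw [hIBP]
    exact div_neg_of_neg_of_pos (by linarith) hpos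
  set μ := -k with hμdef
  have hμpos : 0 < μ := by simp [hμdef]; linarith
  set ω := Real.sqrt μ with hωdef
  have hω2 : ω^2 = μ := Real.sq_sqrt hμpos.le
  have hωpos : 0 < ω := Real.sqrt_pos.mpr hμpos
  -- the function u = w'' + μ w
  set u : ℝ → ℝ := fun x => D 2 w x + μ * w x with hudef
  set u' : ℝ → ℝ := fun x => D 3 w x + μ * D 1 w x with hu'def
  have hu : ∀ x ∈ Set.Icc (0:ℝ) 1, HasDerivWithinAt u (u' x) (Set.Icc (0:ℝ) 1) x := by
    intro x hx
    exact (hasDeriv_D hw (n := 2) (by norm_num) hx).add ((hderiv01 x hx).const_mul μ)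
  have hu' : ∀ x ∈ Set.Icc (0:ℝ) 1,
      HasDerivWithinAt u' (-μ * u x + 0) (Set.Icc (0:ℝ) 1) x := by
    intro x hx
    have h := (hasDeriv_D hw (n := 3) (by norm_num) hx).add
      ((hasDeriv_D hw (n := 1) (by norm_num) hx).const_mul μ)
    refine h.congr_deriv ?_
    rw [hode x hx]
    have hkm : k = -μ := by rw [hμdef]; ring
    rw [hkm]
    simp only [hudef]
    ring
  set α := u' 0 / ω with hαdef
  have hgu : ∀ x : ℝ, HasDerivAt (fun y => α * Real.sin (ω * y)) (α * ω * Real.cos (ω * x)) x := by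
    intro x
    have := (hasDerivAt_sin_mul ω x).const_mul α
    exact this.congr_deriv (by ring)
  have hgu' : ∀ x : ℝ, HasDerivAt (fun y => α * ω * Real.cos (ω * y))
      (-μ * (α * Real.sin (ω * x)) + 0) x := by
    intro x
    have := (hasDerivAt_cos_mul ω x).const_mul (α * ω)
    refine this.congr_deriv ?_
    rw [← hω2]
    ring
  have hueq : ∀ x ∈ Set.Icc (0:ℝ) 1, u x = α * Real.sin (ω * x) := by
    apply ode_unique hμpos.le (f := fun _ => 0) hu hu'
      (fun x _ => (hgu x).hasDerivWithinAt)
      (fun x _ => (hgu' x).hasDerivWithinAt)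
    · simp [hudef, h0'', h0]
    · rw [hαdef]
      simp [div_mul_cancel₀ _ hωpos.ne']
  -- w satisfies w'' = -μ w + α sin(ωx)
  have hw'' : ∀ x ∈ Set.Icc (0:ℝ) 1,
      HasDerivWithinAt (D 1 w) (-μ * w x + α * Real.sin (ω * x)) (Set.Icc (0:ℝ) 1) x := by
    intro x hx
    have h := hasDeriv_D hw (n := 1) (by norm_num) hx
    have he := hueq x hx
    simp only [hudef] at he
    have : D 2 w x = -μ * w x + α * Real.sin (ω * x) := by linarith
    rwa [this] at h
  set γ := -α/(2*ω) with hγdef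
  set β := (D 1 w 0 - γ)/ω with hβdef
  have hαγ : α = -(2*γ*ω) := by
    rw [hγdef]
    field_simp
  set g : ℝ → ℝ := fun x => β * Real.sin (ω * x) + γ * (x * Real.cos (ω * x)) with hgdef
  set g' : ℝ → ℝ := fun x => β * ω * Real.cos (ω * x)
    + γ * (Real.cos (ω * x) - ω * (x * Real.sin (ω * x))) with hg'def
  have hg : ∀ x : ℝ, HasDerivAt g (g' x) x := by
    intro x
    have h1' := (hasDerivAt_sin_mul ω x).const_mul β
    have h2' := (((hasDerivAt_id x).mul (hasDerivAt_cos_mul ω x)).const_mul γ)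
    have := h1'.add h2'
    refine this.congr_deriv ?_
    simp only [hg'def, id_eq]
    ring
  have hg' : ∀ x : ℝ, HasDerivAt g' (-μ * g x + α * Real.sin (ω * x)) x := by
    intro x
    have h1' := (hasDerivAt_cos_mul ω x).const_mul (β * ω)
    have h2' := ((hasDerivAt_cos_mul ω x).sub
      (((hasDerivAt_id x).mul (hasDerivAt_sin_mul ω x)).const_mul ω)).const_mul γ
    have := h1'.add h2'
    refine this.congr_deriv ?_
    simp only [hgdef, id_eq]
    rw [hαγ, ← hω2]
    ring
  have hweq : ∀ x ∈ Set.Icc (0:ℝ) 1, w x = g x := by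
    apply ode_unique hμpos.le (f := fun x => α * Real.sin (ω * x)) hderiv01 hw''
      (fun x _ => (hg x).hasDerivWithinAt)
      (fun x _ => (hg' x).hasDerivWithinAt)
    · simp [hgdef, h0]
    · simp only [hg'def]
      rw [hβdef]
      field_simp
      simp only [mul_zero, Real.cos_zero, Real.sin_zero]
      ring
  -- boundary conditions
  have hw1 : β * Real.sin ω + γ * Real.cos ω = 0 := by
    have := hweq 1 h1S
    rw [h1] at this
    simp only [hgdef, mul_one, one_mul] at this
    linarith
  have hu1 : α * Real.sin ω = 0 := by
    have := hueq 1 h1S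
    simp only [hudef, h1'', h1, mul_one] at this
    linarith
  by_cases hsin : Real.sin ω = 0
  · -- ω = mπ
    obtain ⟨m, hm⟩ := Real.sin_eq_zero_iff.mp hsin
    have hmpos : 0 < m := by
      by_contra hcon
      push_neg at hcon
      have : (m:ℝ) ≤ 0 := by exact_mod_cast hcon
      nlinarith [Real.pi_pos]
    have hcosne : Real.cos ω ≠ 0 := by
      intro h
      have := Real.sin_sq_add_cos_sq ω
      rw [hsin, h] at this
      norm_num at this
    have hγ0 : γ = 0 := by
      rw [hsin] at hw1
      have : γ * Real.cos ω = 0 := by linarith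
      rcases mul_eq_zero.mp this with h | h
      · exact h
      · exact absurd h hcosne
    have hβne : β ≠ 0 := by
      intro h
      apply hwzero_contra
      intro x hx
      rw [hweq x hx]
      simp [hgdef, h, hγ0]
    refine ⟨m.toNat, by omega, β, hβne, ?_⟩
    intro x hx
    have hcast : ((m.toNat : ℝ)) * π = ω := by
      rw [← hm]
      congr 1
      exact_mod_cast Int.toNat_of_nonneg hmpos.le
    rw [hweq x hx]
    simp only [hgdef, hγ0, zero_mul, mul_zero, add_zero]
    rw [hcast]
  · -- impossible case
    exfalso
    have hα0 : α = 0 := by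
      rcases mul_eq_zero.mp hu1 with h | h
      · exact h
      · exact absurd h hsin
    have hγ0 : γ = 0 := by rw [hγdef, hα0]; ring
    have hβ0 : β = 0 := by
      rw [hγ0] at hw1
      rcases mul_eq_zero.mp (by linarith : β * Real.sin ω = 0) with h | h
      · exact h
      · exact absurd h hsin
    apply hwzero_contra
    intro x hx
    rw [hweq x hx]
    simp [hgdef, hβ0, hγ0]
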